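/- Let L be a complete lattice and C ⊆ L a subset such that every element of L is the supremum of some subset of C. Then an element p ∈ L is strongly irreducible in L if and only if for all a, b ∈ C, a ⊓ b ≤ p implies a ≤ p or b ≤ p. -/
import Mathlib

/-- An element `p` of a lattice is *strongly irreducible* if
`a ⊓ b ≤ p` implies `a ≤ p` or `b ≤ p` for all `a b`. -/
def StronglyIrreducible {α : Type*} [SemilatticeInf α] (p : α) : Prop :=
  ∀ a b : α, a ⊓ b ≤ p → a ≤ p ∨ b ≤ p

/-- If every element of a complete lattice is a supremum of elements of `C`, then
strong irreducibility can be tested on elements of `C`. -/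
theorem stronglyIrreducible_iff_on_generators
    {α : Type*} [CompleteLattice α] (C : Set α)
    (hC : ∀ a : α, ∃ S : Set α, S ⊆ C ∧ a = sSup S) (p : α) :
    StronglyIrreducible p ↔ ∀ a ∈ C, ∀ b ∈ C, a ⊓ b ≤ p → a ≤ p ∨ b ≤ p := by
  constructor
  · intro h a _ b _ hab
    exact h a b hab
  · intro h a b hab
    by_contra hcon
    push_neg at hcon
    obtain ⟨ha, hb⟩ := hcon
    obtain ⟨S, hSC, rfl⟩ := hC a
    obtain ⟨T, hTC, rfl⟩ := hC b
    obtain ⟨s, hsS, hs⟩ : ∃ s ∈ S, ¬ s ≤ p := by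
      by_contra hc; push_neg at hc; exact ha (sSup_le hc)
    obtain ⟨t, htT, ht⟩ : ∃ t ∈ T, ¬ t ≤ p := by
      by_contra hc; push_neg at hc; exact hb (sSup_le hc)
    have : s ⊓ t ≤ p :=
      le_trans (inf_le_inf (le_sSup hsS) (le_sSup htT)) hab
    rcases h s (hSC hsS) t (hTC htT) this with h' | h'
    · exact hs h'
    · exact ht h'
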